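/- Let V be a finite set of unit vectors in ℝⁿ such that for all distinct v,w ∈ V, |⟨v,w⟩| ∈ {0, α} for a fixed real α with 0 < α < 1. Then |V| ≤ binom(n+2,3). -/

import Mathlib

open scoped InnerProductSpace

theorem stmt_5 {n : ℕ} (α : ℝ) (hα : 0 < α) (hα1 : α < 1)
    (V : Finset (EuclideanSpace ℝ (Fin n)))
    (hunit : ∀ v ∈ V, ‖v‖ = 1)
    (hangle : ∀ v ∈ V, ∀ w ∈ V, v ≠ w →
      |⟪v, w⟫_ℝ| = 0 ∨ |⟪v, w⟫_ℝ| = α) :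
    V.card ≤ Nat.choose (n + 2) 3 := by
  classical
  let m : Sym (Fin n) 3 → (EuclideanSpace ℝ (Fin n) → ℝ) :=
    fun s x => ((s : Multiset (Fin n)).map x).prod
  set S : Submodule ℝ (EuclideanSpace ℝ (Fin n) → ℝ) :=
    Submodule.span ℝ (Set.range m) with hS
  let st : Fin n → Fin n → Fin n → Sym (Fin n) 3 := fun i j k =>
    ⟨i ::ₘ j ::ₘ {k}, by simp⟩
  have hst : ∀ i j k, ∀ x : EuclideanSpace ℝ (Fin n),
      m (st i j k) x = x i * (x j * x k) := by
    intro i j k x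
    simp [m, st, mul_assoc]
  let q : EuclideanSpace ℝ (Fin n) → (EuclideanSpace ℝ (Fin n) → ℝ) :=
    fun v x => (⟪v, x⟫_ℝ)^3 - α^2 * ⟪x, x⟫_ℝ * ⟪v, x⟫_ℝ
  have hinner : ∀ v x : EuclideanSpace ℝ (Fin n), ⟪v, x⟫_ℝ = ∑ i, v i * x i := by
    intro v x
    simp [PiLp.inner_apply, RCLike.inner_apply, conj_trivial]
    exact Finset.sum_congr rfl fun i _ => mul_comm _ _
  have hmem : ∀ v : EuclideanSpace ℝ (Fin n), q v ∈ S := by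
    intro v
    have hq : q v =
        (∑ i, ∑ j, ∑ k, (v i * v j * v k) • m (st i j k)) +
        ∑ i, ∑ j, (-(α^2) * v j) • m (st i i j) := by
      funext x
      have A : (∑ i, v i * x i)^3
          = ∑ i, ∑ j, ∑ k, (v i * v j * v k) * (x i * (x j * x k)) := by
        rw [pow_succ, pow_two, Finset.sum_mul_sum, Finset.sum_mul]
        refine Finset.sum_congr rfl fun i _ => ?_
        rw [Finset.sum_mul]
        refine Finset.sum_congr rfl fun j _ => ?_
        rw [Finset.mul_sum]
        exact Finset.sum_congr rfl fun k _ => by ring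
      have B : ∑ i, ∑ j, (-(α^2) * v j) * (x i * (x i * x j))
          = -(α^2 * (∑ i, x i * x i) * (∑ j, v j * x j)) := by
        rw [mul_assoc, Finset.sum_mul_sum, Finset.mul_sum, ← Finset.sum_neg_distrib]
        refine Finset.sum_congr rfl fun i _ => ?_
        rw [Finset.mul_sum, ← Finset.sum_neg_distrib]
        exact Finset.sum_congr rfl fun j _ => by ring
      simp only [q, hinner, Pi.add_apply, Finset.sum_apply, Pi.smul_apply, smul_eq_mul,
        hst]
      rw [A, B, sub_eq_add_neg]
    rw [hq]
    refine Submodule.add_mem _ ?_ ?_ <;>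
    · refine Submodule.sum_mem _ fun i _ => Submodule.sum_mem _ fun j _ => ?_
      try refine Submodule.sum_mem _ fun k _ => ?_
      exact Submodule.smul_mem _ _ (Submodule.subset_span (Set.mem_range_self _))
  have hind : LinearIndependent ℝ (fun v : V => q (v : EuclideanSpace ℝ (Fin n))) := by
    rw [Fintype.linearIndependent_iff]
    intro g hg w
    have hgw := congrFun hg (w : EuclideanSpace ℝ (Fin n))
    simp only [Finset.sum_apply, Pi.smul_apply, smul_eq_mul, Pi.zero_apply] at hgw
    have hww : ⟪(w : EuclideanSpace ℝ (Fin n)), (w : EuclideanSpace ℝ (Fin n))⟫_ℝ = 1 := by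
      rw [real_inner_self_eq_norm_sq, hunit _ w.2]; norm_num
    have hsum : ∑ v : V, g v * q (v : EuclideanSpace ℝ (Fin n)) (w : EuclideanSpace ℝ (Fin n))
        = g w * (1 - α^2) := by
      rw [Finset.sum_eq_single w]
      · simp only [q, hww]; ring
      · intro v _ hvw
        have hne : (v : EuclideanSpace ℝ (Fin n)) ≠ (w : EuclideanSpace ℝ (Fin n)) :=
          Subtype.coe_ne_coe.mpr hvw
        rcases hangle _ v.2 _ w.2 hne with h | h
        · have h0 : ⟪(v : EuclideanSpace ℝ (Fin n)), (w : EuclideanSpace ℝ (Fin n))⟫_ℝ = 0 :=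
            abs_eq_zero.mp h
          have hz : q (v : EuclideanSpace ℝ (Fin n)) (w : EuclideanSpace ℝ (Fin n)) = 0 := by
            simp only [q]
            rw [h0]; ring
          rw [hz, mul_zero]
        · have h2 : (⟪(v : EuclideanSpace ℝ (Fin n)), (w : EuclideanSpace ℝ (Fin n))⟫_ℝ)^2
              = α^2 := by rw [← sq_abs, h]
          have hq' : q (v : EuclideanSpace ℝ (Fin n)) (w : EuclideanSpace ℝ (Fin n))
              = ⟪(v : EuclideanSpace ℝ (Fin n)), (w : EuclideanSpace ℝ (Fin n))⟫_ℝ *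
                ((⟪(v : EuclideanSpace ℝ (Fin n)), (w : EuclideanSpace ℝ (Fin n))⟫_ℝ)^2 - α^2) := by
            simp only [q, hww]; ring
          rw [hq', h2]; ring
      · intro h; exact absurd (Finset.mem_univ w) h
    rw [hsum] at hgw
    have hne : (1 - α^2 : ℝ) ≠ 0 := by nlinarith
    have := mul_eq_zero.mp hgw
    tauto
  haveI : FiniteDimensional ℝ S := FiniteDimensional.span_of_finite ℝ (Set.finite_range m)
  let f : V → S := fun v => ⟨q (v : EuclideanSpace ℝ (Fin n)), hmem _⟩
  have hindf : LinearIndependent ℝ f := by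
    apply LinearIndependent.of_comp S.subtype
    exact hind
  have hcard : Fintype.card V ≤ Module.finrank ℝ S :=
    hindf.fintype_card_le_finrank
  have hdim : Module.finrank ℝ S ≤ Fintype.card (Sym (Fin n) 3) := by
    rw [hS]; exact finrank_range_le_card m
  have hsym : Fintype.card (Sym (Fin n) 3) = Nat.choose (n + 2) 3 := by
    rw [Sym.card_sym_eq_choose, Fintype.card_fin]
    congr 1
  calc V.card = Fintype.card V := (Fintype.card_coe V).symm
    _ ≤ Module.finrank ℝ S := hcard
    _ ≤ Fintype.card (Sym (Fin n) 3) := hdim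
    _ = Nat.choose (n + 2) 3 := hsym
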